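/- arXiv:1408.6351 — 2 statements merged into one kernel-verified Lean document; each statement's English description precedes it below -/
import Mathlib

section
/- Assume |α_v| ≤ Q/2 for every vertex v (local minimality). Then 2·t_1 + 2·t_2 ≥ (q+1−√q)·|α| + (ε/2)·(q+1−√q)·r. -/
open scoped Classical
open Matrix

structure SComplex (V : Type) [DecidableEq V] where
  faces : Finset (Finset V)
  down_closed : ∀ σ ∈ faces, ∀ τ ⊆ σ, τ ∈ faces

namespace SComplex

variable {V : Type} [Fintype V] [DecidableEq V]

/-- The faces of cardinality `n` (i.e. of dimension `n-1`); so `K Y 2` is the edge set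
and `K Y 3` the set of triangles. -/
def K (X : SComplex V) (n : ℕ) : Finset (Finset V) := X.faces.filter fun σ => σ.card = n

/-- `X` is pure with all facets (maximal faces) of cardinality `D` (dimension `D-1`). -/
def IsPure (X : SComplex V) (D : ℕ) : Prop :=
  X.faces.Nonempty ∧ ∀ σ ∈ X.faces, ∃ τ ∈ X.faces, σ ⊆ τ ∧ τ.card = D

end SComplex

variable {V : Type} [Fintype V] [DecidableEq V]

/-- `t_i`: the number of triangles of `Y` containing exactly `i` edges of `α`. -/
def tcount (Y : SComplex V) (α : Finset (Finset V)) (i : ℕ) : ℕ :=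
  ((Y.K 3).filter fun τ => (α.filter fun e => e ⊆ τ).card = i).card

/-- `α_v`: the set of edges of `α` containing the vertex `v`. -/
def alphaV (α : Finset (Finset V)) (v : V) : Finset (Finset V) :=
  α.filter fun e => v ∈ e

/-- The 1-skeleton of `Y`, as a simple graph on the vertex type. -/
def skeletonGraph (Y : SComplex V) : SimpleGraph V where
  Adj u w := u ≠ w ∧ ({u, w} : Finset V) ∈ Y.faces
  symm := by
    constructor
    intro u w h
    exact ⟨h.1.symm, by rw [Finset.pair_comm]; exact h.2⟩
  loopless := by constructor; intro u h; exact h.1 rfl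

/-- The vertices of the link of `v`: the edges of `Y` containing `v`. -/
def linkVerts (Y : SComplex V) (v : V) : Finset (Finset V) :=
  (Y.K 2).filter fun e => v ∈ e

/-- The link graph `Y_v`: vertices are the edges of `Y` containing `v`, two edges being
adjacent iff they lie in a common triangle of `Y`. -/
def linkGraph (Y : SComplex V) (v : V) : SimpleGraph ↥(linkVerts Y v) where
  Adj e f := e ≠ f ∧ (e.1 ∪ f.1) ∈ Y.K 3
  symm := by
    constructor
    intro e f h
    exact ⟨h.1.symm, by rw [Finset.union_comm]; exact h.2⟩
  loopless := by constructor; intro e h; exact h.1 rfl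

/-- The standing hypotheses on the 2-dimensional complex `Y` (with `Q = 2(q²+q+1)`):
`q ≥ 2`; `Y` is finite pure 2-dimensional; (i) every edge lies in exactly `q+1` triangles;
(ii) the 1-skeleton is a connected `Q`-regular graph whose adjacency eigenvalues other than
`Q` have absolute value at most `6q`; (iii) every link `Y_v` is a connected bipartite
`(q+1)`-regular graph on `Q` vertices whose adjacency eigenvalues other than `±(q+1)` have
absolute value at most `√q`. -/
def Setup (q : ℕ) (Y : SComplex V) : Prop :=
  2 ≤ q ∧ Y.IsPure 3 ∧
  (∀ e ∈ Y.K 2, ((Y.K 3).filter fun τ => e ⊆ τ).card = q + 1) ∧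
  (skeletonGraph Y).Connected ∧
  (∀ v : V, (skeletonGraph Y).degree v = 2 * (q ^ 2 + q + 1)) ∧
  (∀ mu : ℝ, (∃ f : V → ℝ, f ≠ 0 ∧ (skeletonGraph Y).adjMatrix ℝ *ᵥ f = mu • f) →
    mu = 2 * ((q : ℝ) ^ 2 + q + 1) ∨ |mu| ≤ 6 * (q : ℝ)) ∧
  (∀ v : V,
    (linkGraph Y v).Connected ∧
    (∃ C : ↥(linkVerts Y v) → Bool, ∀ a b, (linkGraph Y v).Adj a b → C a ≠ C b) ∧
    (∀ a : ↥(linkVerts Y v), (linkGraph Y v).degree a = q + 1) ∧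
    (linkVerts Y v).card = 2 * (q ^ 2 + q + 1) ∧
    (∀ mu : ℝ, (∃ f : ↥(linkVerts Y v) → ℝ, f ≠ 0 ∧
        (linkGraph Y v).adjMatrix ℝ *ᵥ f = mu • f) →
      mu = (q : ℝ) + 1 ∨ mu = -((q : ℝ) + 1) ∨ |mu| ≤ Real.sqrt q))

lemma mv_sum {ι : Type} [Fintype ι] (M : Matrix ι ι ℝ) (g : ι → ι → ℝ) :
    M *ᵥ (∑ i, g i) = ∑ i, M *ᵥ (g i) := by
  ext j
  simp [Matrix.mulVec, dotProduct, Finset.sum_apply, Finset.mul_sum]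
  rw [Finset.sum_comm]

lemma dot_sum {ι : Type} [Fintype ι] (x : ι → ℝ) (g : ι → ι → ℝ) :
    x ⬝ᵥ (∑ i, g i) = ∑ i, x ⬝ᵥ (g i) := by
  simp [dotProduct, Finset.sum_apply, Finset.mul_sum]
  rw [Finset.sum_comm]

lemma quadform_nonpos {ι : Type} [Fintype ι] [DecidableEq ι] (M : Matrix ι ι ℝ)
    (hM : M.IsHermitian) (h : ∀ i, hM.eigenvalues i ≤ 0) (x : ι → ℝ) :
    x ⬝ᵥ (M *ᵥ x) ≤ 0 := by
  set B := hM.eigenvectorBasis with hB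
  set x' : EuclideanSpace ℝ ι := WithLp.toLp 2 x with hx'
  have hdot : ∀ i, x ⬝ᵥ ⇑(B i) = B.repr x' i := by
    intro i
    rw [B.repr_apply_apply]
    simp [PiLp.inner_apply, dotProduct, mul_comm, RCLike.inner_apply]
    rfl
  have hxx : x = ∑ i, B.repr x' i • ⇑(B i) := by
    have := congrArg WithLp.ofLp (B.sum_repr x').symm
    rw [WithLp.ofLp_sum] at this
    simpa only [WithLp.ofLp_smul] using this
  have hmv : M *ᵥ x = ∑ i, (B.repr x' i * hM.eigenvalues i) • ⇑(B i) := by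
    conv_lhs => rw [hxx]
    rw [show (∑ i, B.repr x' i • ⇑(B i))
        = ∑ i, (fun i => B.repr x' i • ⇑(B i)) i from rfl, mv_sum]
    refine Finset.sum_congr rfl fun i _ => ?_
    rw [Matrix.mulVec_smul]
    rw [show M *ᵥ ⇑(B i) = hM.eigenvalues i • ⇑(B i)
      from hM.mulVec_eigenvectorBasis i]
    rw [smul_smul]
  rw [hmv]
  rw [show (∑ i, (B.repr x' i * hM.eigenvalues i) • ⇑(B i))
      = ∑ i, (fun i => (B.repr x' i * hM.eigenvalues i) • ⇑(B i)) i from rfl,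
    dot_sum]
  refine Finset.sum_nonpos fun i _ => ?_
  rw [show x ⬝ᵥ ((B.repr x' i * hM.eigenvalues i) • ⇑(B i))
      = (B.repr x' i * hM.eigenvalues i) * (x ⬝ᵥ ⇑(B i)) from
    dotProduct_smul _ _ _, hdot]
  nlinarith [sq_nonneg (B.repr x' i), h i]
lemma mixing {ι : Type} [Fintype ι] [DecidableEq ι] [Nonempty ι]
    (M : Matrix ι ι ℝ) (hsym : M.IsHermitian)
    (d lam : ℝ)
    (hreg : M *ᵥ (fun _ => (1:ℝ)) = d • (fun _ => (1:ℝ)))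
    (heig : ∀ (mu : ℝ) (f : ι → ℝ), f ≠ 0 → M *ᵥ f = mu • f → (∑ i, f i) = 0 → mu ≤ lam)
    (x : ι → ℝ) :
    x ⬝ᵥ (M *ᵥ x) ≤ lam * (x ⬝ᵥ x) + ((d - lam) / (Fintype.card ι)) * (∑ i, x i)^2 := by
  have hn : (0:ℝ) < (Fintype.card ι : ℝ) := by exact_mod_cast Fintype.card_pos
  set n : ℝ := (Fintype.card ι : ℝ) with hndef
  set J : Matrix ι ι ℝ := Matrix.of fun _ _ => (1:ℝ) with hJ
  set M' : Matrix ι ι ℝ := M - lam • (1 : Matrix ι ι ℝ) - ((d - lam)/n) • J with hM'def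
  have hMapp : ∀ i j, M j i = M i j := by
    intro i j
    have := congrFun (congrFun hsym.eq i) j
    simpa [Matrix.conjTranspose_apply] using this
  have hJmul : ∀ y : ι → ℝ, J *ᵥ y = fun _ => (∑ i, y i) := by
    intro y; ext j; simp [hJ, Matrix.mulVec, dotProduct]
  have hM'v : ∀ y : ι → ℝ, M' *ᵥ y = M *ᵥ y - lam • y - ((d - lam)/n) • (fun _ => (∑ i, y i)) := by
    intro y
    rw [hM'def, Matrix.sub_mulVec, Matrix.sub_mulVec, Matrix.smul_mulVec,
      Matrix.smul_mulVec, Matrix.one_mulVec, hJmul]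
  have hM'sym : M'.IsHermitian := by
    ext i j
    simp [hM'def, Matrix.conjTranspose_apply, Matrix.sub_apply, Matrix.smul_apply,
      Matrix.one_apply, hJ, hMapp i j, eq_comm]
  have hM'app : ∀ i j, M' j i = M' i j := by
    intro i j
    have := congrFun (congrFun hM'sym.eq i) j
    simpa [Matrix.conjTranspose_apply] using this
  have hM'one : M' *ᵥ (fun _ => (1:ℝ)) = 0 := by
    rw [hM'v, hreg]
    ext j
    simp [hndef]
  have hrow : ∀ k, ∑ j, M' j k = 0 := by
    intro k
    have h0 := congrFun hM'one k
    simp [Matrix.mulVec, dotProduct] at h0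
    calc ∑ j, M' j k = ∑ j, M' k j := Finset.sum_congr rfl fun j _ => hM'app k j
      _ = 0 := h0
  have hsumM' : ∀ y : ι → ℝ, ∑ j, (M' *ᵥ y) j = 0 := by
    intro y
    calc ∑ j, (M' *ᵥ y) j = ∑ j, ∑ k, M' j k * y k := by simp [Matrix.mulVec, dotProduct]
      _ = ∑ k, ∑ j, M' j k * y k := Finset.sum_comm
      _ = ∑ k, (∑ j, M' j k) * y k := by simp [Finset.sum_mul]
      _ = 0 := by simp [hrow]
  have heigM' : ∀ i, hM'sym.eigenvalues i ≤ 0 := by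
    intro i
    by_contra hpos
    push_neg at hpos
    set nu := hM'sym.eigenvalues i with hnu
    set g : ι → ℝ := ⇑(hM'sym.eigenvectorBasis i) with hg
    have hgeig : M' *ᵥ g = nu • g := hM'sym.mulVec_eigenvectorBasis i
    have hgne : g ≠ 0 := fun h => hM'sym.eigenvectorBasis.toBasis.ne_zero i
      (by rw [OrthonormalBasis.coe_toBasis]; exact (WithLp.ofLp_eq_zero 2).1 h)
    have hsumg : ∑ j, g j = 0 := by
      have h1 := hsumM' g
      rw [hgeig] at h1
      have h2 : nu * ∑ j, g j = 0 := by
        rw [Finset.mul_sum]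
        simpa [Pi.smul_apply, smul_eq_mul] using h1
      exact (mul_eq_zero.1 h2).resolve_left (ne_of_gt hpos)
    have hMg : M *ᵥ g = (nu + lam) • g := by
      have h3 := hM'v g
      rw [hgeig] at h3
      ext j
      have h4 := congrFun h3 j
      simp [hsumg] at h4 ⊢
      linarith
    have := heig (nu + lam) g hgne hMg hsumg
    linarith
  have hq := quadform_nonpos M' hM'sym heigM' x
  rw [hM'v] at hq
  rw [dotProduct_sub, dotProduct_sub, dotProduct_smul,
    dotProduct_smul] at hq
  have hxs : x ⬝ᵥ (fun _ => (∑ i, x i)) = (∑ i, x i)^2 := by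
    simp [dotProduct, ← Finset.sum_mul, sq]
  rw [hxs] at hq
  simp only [smul_eq_mul] at hq
  linarith
lemma sum_coe_attach {β : Type} [DecidableEq β] (s : Finset β) (F : β → ℝ) :
    ∑ e : ↥s, F e.1 = ∑ e ∈ s, F e := by
  rw [Finset.univ_eq_attach, Finset.sum_attach s F]

lemma double_sum_coe_attach {β : Type} [DecidableEq β] (s : Finset β) (F : β → β → ℝ) :
    ∑ e : ↥s, ∑ f : ↥s, F e.1 f.1 = ∑ e ∈ s, ∑ f ∈ s, F e f := by
  calc ∑ e : ↥s, ∑ f : ↥s, F e.1 f.1 = ∑ e : ↥s, ∑ f ∈ s, F e.1 f := by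
        refine Finset.sum_congr rfl fun e _ => ?_
        exact sum_coe_attach s (fun f => F e.1 f)
    _ = ∑ e ∈ s, ∑ f ∈ s, F e f := sum_coe_attach s (fun e => ∑ f ∈ s, F e f)

def pcount (Y : SComplex V) (α : Finset (Finset V)) (v : V) : ℕ :=
  ∑ e ∈ alphaV α v, ∑ f ∈ alphaV α v, if e ≠ f ∧ e ∪ f ∈ Y.K 3 then 1 else 0

lemma alphaV_eq_filter (Y : SComplex V) (α : Finset (Finset V)) (hα : α ⊆ Y.K 2) (v : V) :
    alphaV α v = (linkVerts Y v).filter (fun e => e ∈ α) := by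
  ext e
  simp only [alphaV, linkVerts, Finset.mem_filter]
  constructor
  · rintro ⟨h1, h2⟩; exact ⟨⟨hα h1, h2⟩, h1⟩
  · rintro ⟨⟨_, h2⟩, h3⟩; exact ⟨h3, h2⟩

lemma indicator_dot_self (Y : SComplex V) (α : Finset (Finset V)) (hα : α ⊆ Y.K 2) (v : V) :
    (fun e : ↥(linkVerts Y v) => if e.1 ∈ α then (1:ℝ) else 0) ⬝ᵥ
      (fun e : ↥(linkVerts Y v) => if e.1 ∈ α then (1:ℝ) else 0) = ((alphaV α v).card : ℝ) := by
  rw [alphaV_eq_filter Y α hα v]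
  rw [dotProduct]
  have : ∀ e : ↥(linkVerts Y v), (if e.1 ∈ α then (1:ℝ) else 0) * (if e.1 ∈ α then (1:ℝ) else 0)
      = if e.1 ∈ α then (1:ℝ) else 0 := by intro e; split_ifs <;> ring
  rw [Finset.sum_congr rfl fun e _ => this e,
    sum_coe_attach (linkVerts Y v) (fun e => if e ∈ α then (1:ℝ) else 0)]
  simp [Finset.sum_boole, Finset.filter_mem_eq_inter]

lemma indicator_sum (Y : SComplex V) (α : Finset (Finset V)) (hα : α ⊆ Y.K 2) (v : V) :
    (∑ e : ↥(linkVerts Y v), if e.1 ∈ α then (1:ℝ) else 0) = ((alphaV α v).card : ℝ) := by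
  rw [alphaV_eq_filter Y α hα v,
    sum_coe_attach (linkVerts Y v) (fun e => if e ∈ α then (1:ℝ) else 0)]
  simp [Finset.sum_boole, Finset.filter_mem_eq_inter]

lemma indicator_quadform (Y : SComplex V) (α : Finset (Finset V)) (hα : α ⊆ Y.K 2) (v : V) :
    (fun e : ↥(linkVerts Y v) => if e.1 ∈ α then (1:ℝ) else 0) ⬝ᵥ
      ((linkGraph Y v).adjMatrix ℝ *ᵥ (fun e : ↥(linkVerts Y v) => if e.1 ∈ α then (1:ℝ) else 0))
    = (pcount Y α v : ℝ) := by
  have hAdj : ∀ e f : ↥(linkVerts Y v), (linkGraph Y v).Adj e f ↔ (e.1 ≠ f.1 ∧ e.1 ∪ f.1 ∈ Y.K 3) := by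
    intro e f
    constructor
    · rintro ⟨h1, h2⟩; exact ⟨fun h => h1 (Subtype.ext h), h2⟩
    · rintro ⟨h1, h2⟩; exact ⟨fun h => h1 (congrArg Subtype.val h), h2⟩
  have step1 : (fun e : ↥(linkVerts Y v) => if e.1 ∈ α then (1:ℝ) else 0) ⬝ᵥ
      ((linkGraph Y v).adjMatrix ℝ *ᵥ (fun e : ↥(linkVerts Y v) => if e.1 ∈ α then (1:ℝ) else 0))
      = ∑ e : ↥(linkVerts Y v), ∑ f : ↥(linkVerts Y v),
          if e.1 ∈ α ∧ f.1 ∈ α ∧ e.1 ≠ f.1 ∧ e.1 ∪ f.1 ∈ Y.K 3 then (1:ℝ) else 0 := by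
    rw [dotProduct]
    refine Finset.sum_congr rfl fun e _ => ?_
    rw [Matrix.mulVec, dotProduct, Finset.mul_sum]
    refine Finset.sum_congr rfl fun f _ => ?_
    rw [SimpleGraph.adjMatrix_apply, hAdj e f]
    split_ifs <;> simp_all <;> ring
  rw [step1]
  have step2 : (pcount Y α v : ℝ) = ∑ e ∈ alphaV α v, ∑ f ∈ alphaV α v,
      if e ≠ f ∧ e ∪ f ∈ Y.K 3 then (1:ℝ) else 0 := by
    rw [pcount]
    push_cast
    rfl
  rw [step2, alphaV_eq_filter Y α hα v]
  trans (∑ e ∈ linkVerts Y v, ∑ f ∈ linkVerts Y v,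
      if e ∈ α ∧ f ∈ α ∧ e ≠ f ∧ e ∪ f ∈ Y.K 3 then (1:ℝ) else 0)
  · exact double_sum_coe_attach (linkVerts Y v)
      (fun e f => if e ∈ α ∧ f ∈ α ∧ e ≠ f ∧ e ∪ f ∈ Y.K 3 then (1:ℝ) else 0)
  rw [Finset.sum_filter]
  refine Finset.sum_congr rfl fun e he => ?_
  rw [Finset.sum_filter]
  by_cases heα : e ∈ α
  · rw [if_pos heα]
    refine Finset.sum_congr rfl fun f hf => ?_
    by_cases hfα : f ∈ α <;> simp [heα, hfα]
  · rw [if_neg heα]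
    refine Finset.sum_eq_zero fun f hf => ?_
    simp [heα]
lemma sum_g_iCount (Y : SComplex V) (α : Finset (Finset V)) (hα : α ⊆ Y.K 2) (g : ℕ → ℕ) :
    ∑ τ ∈ Y.K 3, g ((α.filter fun e => e ⊆ τ).card) =
      tcount Y α 0 * g 0 + tcount Y α 1 * g 1 + tcount Y α 2 * g 2 + tcount Y α 3 * g 3 := by
  have hle : ∀ τ ∈ Y.K 3, (α.filter fun e => e ⊆ τ).card < 4 := by
    intro τ hτ
    have hτ3 : τ.card = 3 := (Finset.mem_filter.1 hτ).2
    have hsub : α.filter (fun e => e ⊆ τ) ⊆ τ.powersetCard 2 := by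
      intro e he
      rw [Finset.mem_powersetCard]
      have he' := Finset.mem_filter.1 he
      exact ⟨he'.2, (Finset.mem_filter.1 (hα he'.1)).2⟩
    have := Finset.card_le_card hsub
    rw [Finset.card_powersetCard, hτ3] at this
    simp at this
    omega
  have hmaps : ∀ τ ∈ Y.K 3, (α.filter fun e => e ⊆ τ).card ∈ Finset.range 4 :=
    fun τ hτ => Finset.mem_range.2 (hle τ hτ)
  rw [← Finset.sum_fiberwise_of_maps_to hmaps (fun τ => g ((α.filter fun e => e ⊆ τ).card))]
  have h1 : ∀ j, (∑ τ ∈ (Y.K 3).filter (fun τ => (α.filter fun e => e ⊆ τ).card = j),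
      g ((α.filter fun e => e ⊆ τ).card)) = tcount Y α j * g j := by
    intro j
    rw [Finset.sum_congr rfl (fun τ hτ => by rw [(Finset.mem_filter.1 hτ).2]),
      Finset.sum_const, tcount, smul_eq_mul]
  rw [Finset.sum_congr rfl fun j _ => h1 j]
  simp [Finset.sum_range_succ]

lemma sum_iCount (Y : SComplex V) (α : Finset (Finset V)) (q : ℕ) (hα : α ⊆ Y.K 2)
    (hq : ∀ e ∈ Y.K 2, ((Y.K 3).filter fun τ => e ⊆ τ).card = q + 1) :
    ∑ τ ∈ Y.K 3, (α.filter fun e => e ⊆ τ).card = (q + 1) * α.card := by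
  simp_rw [Finset.card_filter]
  rw [Finset.sum_comm]
  have h1 : ∀ e ∈ α, (∑ τ ∈ Y.K 3, if e ⊆ τ then 1 else 0) = q + 1 := by
    intro e he
    rw [← Finset.card_filter]
    exact hq e (hα he)
  rw [Finset.sum_congr rfl h1, Finset.sum_const, smul_eq_mul, mul_comm]

lemma sum_alphaV (α : Finset (Finset V)) (hc2 : ∀ e ∈ α, (e : Finset V).card = 2) :
    ∑ v : V, (alphaV α v).card = 2 * α.card := by
  simp_rw [alphaV, Finset.card_filter]
  rw [Finset.sum_comm]
  have h1 : ∀ e ∈ α, (∑ v : V, if v ∈ e then 1 else 0) = 2 := by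
    intro e he
    rw [← Finset.card_filter, Finset.filter_univ_mem]
    exact hc2 e he
  rw [Finset.sum_congr rfl h1, Finset.sum_const, smul_eq_mul, mul_comm]

lemma sum_pcount_eq (Y : SComplex V) (α : Finset (Finset V)) (hα : α ⊆ Y.K 2) :
    ∑ v : V, pcount Y α v = ∑ e ∈ α, ∑ f ∈ α, if e ≠ f ∧ e ∪ f ∈ Y.K 3 then 1 else 0 := by
  have hc2 : ∀ e ∈ α, (e : Finset V).card = 2 := fun e he => (Finset.mem_filter.1 (hα he)).2
  have inter1 : ∀ e f : Finset V, e ∈ α → f ∈ α → e ≠ f → e ∪ f ∈ Y.K 3 → (e ∩ f).card = 1 := by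
    intro e f he hf hne hu
    have h3 : (e ∪ f).card = 3 := (Finset.mem_filter.1 hu).2
    have h4 := Finset.card_union_add_card_inter e f
    rw [hc2 e he, hc2 f hf, h3] at h4
    omega
  have hp : ∀ v, pcount Y α v = ∑ e ∈ α, ∑ f ∈ α,
      if v ∈ e ∩ f then (if e ≠ f ∧ e ∪ f ∈ Y.K 3 then 1 else 0) else 0 := by
    intro v
    rw [pcount, alphaV, Finset.sum_filter]
    refine Finset.sum_congr rfl fun e he => ?_
    by_cases hve : v ∈ e
    · simp only [hve, if_true]
      rw [Finset.sum_filter]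
      refine Finset.sum_congr rfl fun f hf => ?_
      by_cases hvf : v ∈ f <;> simp [hvf, Finset.mem_inter, hve]
    · simp [hve, Finset.mem_inter]
  simp_rw [hp]
  rw [Finset.sum_comm]
  refine Finset.sum_congr rfl fun e he => ?_
  rw [Finset.sum_comm]
  refine Finset.sum_congr rfl fun f hf => ?_
  rw [Finset.sum_ite_mem, Finset.univ_inter, Finset.sum_const, smul_eq_mul]
  by_cases hcond : e ≠ f ∧ e ∪ f ∈ Y.K 3
  · rw [inter1 e f he hf hcond.1 hcond.2, if_pos hcond, one_mul]
  · simp [hcond]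

lemma sum_offdiag_eq (Y : SComplex V) (α : Finset (Finset V)) (hα : α ⊆ Y.K 2) :
    ∑ τ ∈ Y.K 3, ((α.filter fun e => e ⊆ τ).card * ((α.filter fun e => e ⊆ τ).card - 1)) =
      ∑ e ∈ α, ∑ f ∈ α, if e ≠ f ∧ e ∪ f ∈ Y.K 3 then 1 else 0 := by
  have hc2 : ∀ e ∈ α, (e : Finset V).card = 2 := fun e he => (Finset.mem_filter.1 (hα he)).2
  have pair_count : ∀ s : Finset (Finset V),
      (∑ e ∈ s, ∑ f ∈ s, if e ≠ f then (1:ℕ) else 0) = s.card * (s.card - 1) := by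
    intro s
    have h1 : ∀ e ∈ s, (∑ f ∈ s, if e ≠ f then (1:ℕ) else 0) = s.card - 1 := by
      intro e he
      rw [← Finset.card_filter, Finset.filter_ne, Finset.card_erase_of_mem he]
    rw [Finset.sum_congr rfl h1, Finset.sum_const, smul_eq_mul]
  have key : ∀ e f : Finset V, e ∈ α → f ∈ α → e ≠ f →
      (∑ τ ∈ Y.K 3, if e ⊆ τ ∧ f ⊆ τ then (1:ℕ) else 0)
        = if e ∪ f ∈ Y.K 3 then 1 else 0 := by
    intro e f he hf hne
    rw [← Finset.card_filter]
    have h3 : ∀ τ ∈ Y.K 3, e ⊆ τ → f ⊆ τ → τ = e ∪ f := by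
      intro τ hτ heτ hfτ
      have hτ3 : τ.card = 3 := (Finset.mem_filter.1 hτ).2
      have hsub : e ∪ f ⊆ τ := Finset.union_subset heτ hfτ
      have hi : (e ∩ f).card ≤ 1 := by
        by_contra hcon
        push_neg at hcon
        have he1 : e ∩ f = e := Finset.eq_of_subset_of_card_le Finset.inter_subset_left
          (by rw [hc2 e he]; omega)
        have hf1 : e ∩ f = f := Finset.eq_of_subset_of_card_le Finset.inter_subset_right
          (by rw [hc2 f hf]; omega)
        exact hne (he1 ▸ hf1)
      have h4 := Finset.card_union_add_card_inter e f
      rw [hc2 e he, hc2 f hf] at h4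
      have hcard : 3 ≤ (e ∪ f).card := by omega
      exact (Finset.eq_of_subset_of_card_le hsub (by omega)).symm
    by_cases hu : e ∪ f ∈ Y.K 3
    · rw [if_pos hu]
      have hsingle : (Y.K 3).filter (fun τ => e ⊆ τ ∧ f ⊆ τ) = {e ∪ f} := by
        apply Finset.eq_singleton_iff_unique_mem.2
        constructor
        · exact Finset.mem_filter.2 ⟨hu, Finset.subset_union_left, Finset.subset_union_right⟩
        · intro τ hτ
          have hτ' := Finset.mem_filter.1 hτ
          exact h3 τ hτ'.1 hτ'.2.1 hτ'.2.2
      rw [hsingle, Finset.card_singleton]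
    · rw [if_neg hu, Finset.card_eq_zero, Finset.filter_eq_empty_iff]
      rintro τ hτ ⟨h1, h2⟩
      exact hu ((h3 τ hτ h1 h2) ▸ hτ)
  have step1 : ∀ τ ∈ Y.K 3, ((α.filter fun e => e ⊆ τ).card * ((α.filter fun e => e ⊆ τ).card - 1))
      = ∑ e ∈ α, ∑ f ∈ α, if e ⊆ τ ∧ f ⊆ τ ∧ e ≠ f then (1:ℕ) else 0 := by
    intro τ _
    rw [← pair_count (α.filter fun e => e ⊆ τ), Finset.sum_filter]
    refine Finset.sum_congr rfl fun e he => ?_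
    by_cases heτ : e ⊆ τ
    · simp only [heτ, if_true]
      rw [Finset.sum_filter]
      refine Finset.sum_congr rfl fun f hf => ?_
      by_cases hfτ : f ⊆ τ <;> simp [hfτ, heτ]
    · simp [heτ]
  rw [Finset.sum_congr rfl step1, Finset.sum_comm]
  refine Finset.sum_congr rfl fun e he => ?_
  rw [Finset.sum_comm]
  refine Finset.sum_congr rfl fun f hf => ?_
  by_cases hne : e ≠ f
  · have : ∀ τ ∈ Y.K 3, (if e ⊆ τ ∧ f ⊆ τ ∧ e ≠ f then (1:ℕ) else 0)
        = if e ⊆ τ ∧ f ⊆ τ then 1 else 0 := by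
      intro τ _
      by_cases h1 : e ⊆ τ <;> by_cases h2 : f ⊆ τ <;> simp [h1, h2, hne]
    rw [Finset.sum_congr rfl this, key e f he hf hne]
    simp [hne]
  · push_neg at hne
    simp [hne]
/-- Under the standing hypotheses, if `|α_v| ≤ Q/2` for every vertex `v`
(local minimality), then `2t₁ + 2t₂ ≥ (q+1−√q)|α| + (ε/2)(q+1−√q)·r`, where `r` is the total
contribution of the thin vertices. -/
theorem two_t1_add_two_t2_lower_bound
    {V : Type} [Fintype V] [DecidableEq V] (q : ℕ) (Y : SComplex V) (hY : Setup q Y)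
    (ε : ℝ) (hε0 : 0 < ε) (hε1 : ε < 1)
    (α : Finset (Finset V)) (hα : α ⊆ Y.K 2)
    (hlocmin : ∀ v : V, ((alphaV α v).card : ℝ) ≤ 2 * ((q : ℝ) ^ 2 + q + 1) / 2) :
    2 * (tcount Y α 1 : ℝ) + 2 * (tcount Y α 2 : ℝ) ≥
      ((q : ℝ) + 1 - Real.sqrt q) * (α.card : ℝ) +
        (ε / 2) * ((q : ℝ) + 1 - Real.sqrt q) *
          (∑ v ∈ Finset.univ.filter (fun v : V => (alphaV α v).Nonempty ∧
              ((alphaV α v).card : ℝ) < (1 - ε) * (2 * ((q : ℝ) ^ 2 + q + 1)) / 2),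
            ((alphaV α v).card : ℝ)) := by
  classical
  obtain ⟨hq2, hpure, hedge, hconnsk, hdegsk, heigsk, hlinks⟩ := hY
  have hc2 : ∀ e ∈ α, (e : Finset V).card = 2 := fun e he => (Finset.mem_filter.1 (hα he)).2
  have hQpos : (0:ℝ) < 2 * ((q:ℝ)^2 + q + 1) := by positivity
  have hq0 : (0:ℝ) ≤ (q:ℝ) := Nat.cast_nonneg q
  have hsq0 : (0:ℝ) ≤ Real.sqrt q := Real.sqrt_nonneg q
  have hsqle : Real.sqrt q ≤ (q:ℝ) + 1 := by
    have h1 : Real.sqrt q ≤ Real.sqrt (((q:ℝ)+1)^2) := by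
      apply Real.sqrt_le_sqrt; nlinarith
    rwa [Real.sqrt_sq (by positivity)] at h1
  -- per-vertex mixing bound
  have hmix : ∀ v : V, (pcount Y α v : ℝ) ≤ Real.sqrt q * ((alphaV α v).card : ℝ)
      + (((q:ℝ) + 1 - Real.sqrt q) / (2 * ((q:ℝ)^2 + q + 1))) * ((alphaV α v).card : ℝ)^2 := by
    intro v
    obtain ⟨hconn, -, hdeg, hcard, heigtri⟩ := hlinks v
    haveI hne : Nonempty ↥(linkVerts Y v) := by
      rw [← Fintype.card_pos_iff, Fintype.card_coe, hcard]
      omega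
    have hherm : ((linkGraph Y v).adjMatrix ℝ).IsHermitian := by
      ext i j
      simp only [Matrix.conjTranspose_apply, SimpleGraph.adjMatrix_apply, star_trivial]
      rw [SimpleGraph.adj_comm]
    have hreg : (linkGraph Y v).adjMatrix ℝ *ᵥ (fun _ => (1:ℝ))
        = ((q:ℝ)+1) • (fun _ => (1:ℝ)) := by
      ext u
      rw [SimpleGraph.adjMatrix_mulVec_apply]
      have : ∑ w ∈ (linkGraph Y v).neighborFinset u, (1:ℝ) = ((linkGraph Y v).degree u : ℝ) := by
        rw [Finset.sum_const, SimpleGraph.degree]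
        simp
      rw [this, hdeg u]
      push_cast
      simp
    have heig : ∀ (mu : ℝ) (f : ↥(linkVerts Y v) → ℝ), f ≠ 0 →
        (linkGraph Y v).adjMatrix ℝ *ᵥ f = mu • f → (∑ i, f i) = 0 → mu ≤ Real.sqrt q := by
      intro mu f hf0 hfeig hsum
      rcases heigtri mu ⟨f, hf0, hfeig⟩ with h | h | h
      · exfalso
        have hlap : (linkGraph Y v).lapMatrix ℝ *ᵥ f = 0 := by
          ext u
          rw [SimpleGraph.lapMatrix, Matrix.sub_mulVec]
          have h1 := congrFun hfeig u
          simp only [Pi.smul_apply, smul_eq_mul] at h1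
          rw [h] at h1
          simp only [Pi.sub_apply, Pi.zero_apply]
          rw [h1, SimpleGraph.degMatrix_mulVec_apply, hdeg u]
          push_cast
          ring
        have hker : Matrix.toLin' ((linkGraph Y v).lapMatrix ℝ) f = 0 := by
          rw [Matrix.toLin'_apply]; exact hlap
        have hreach := (SimpleGraph.lapMatrix_mulVec_eq_zero_iff_forall_reachable
          (G := linkGraph Y v) (x := f)).1 hlap
        obtain ⟨u0⟩ := id hne
        have hconst : ∀ u, f u = f u0 := fun u => hreach u u0 (hconn.preconnected u u0)
        rw [Finset.sum_congr rfl (fun u _ => hconst u), Finset.sum_const] at hsum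
        have hcard0 : (Fintype.card ↥(linkVerts Y v)) ≠ 0 := Fintype.card_ne_zero
        have hfu0 : f u0 = 0 := by
          rw [Finset.card_univ, nsmul_eq_mul] at hsum
          rcases mul_eq_zero.1 hsum with h' | h'
          · exact absurd h' (by exact_mod_cast hcard0)
          · exact h'
        exact hf0 (funext fun u => by rw [hconst u, hfu0]; simp)
      · rw [h]; linarith
      · exact (abs_le.1 h).2
    have hm := mixing ((linkGraph Y v).adjMatrix ℝ) hherm ((q:ℝ)+1) (Real.sqrt q) hreg heig
      (fun e => if e.1 ∈ α then (1:ℝ) else 0)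
    rw [indicator_quadform Y α hα v, indicator_dot_self Y α hα v, indicator_sum Y α hα v] at hm
    have hcardι : ((Fintype.card ↥(linkVerts Y v) : ℕ) : ℝ) = 2 * ((q:ℝ)^2 + q + 1) := by
      rw [Fintype.card_coe, hcard]; push_cast; ring
    rw [hcardι] at hm
    exact hm
  -- combinatorial identity
  have hcomb : 2 * ((q+1) * α.card) = 2 * tcount Y α 1 + 2 * tcount Y α 2
      + ∑ v : V, pcount Y α v := by
    have hF1 := sum_g_iCount Y α hα (fun j => j)
    have hF2 := sum_g_iCount Y α hα (fun j => j * (j - 1))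
    have hI1 := sum_iCount Y α q hα hedge
    have hI3 := (sum_pcount_eq Y α hα).trans (sum_offdiag_eq Y α hα).symm
    omega
  have hcombR : 2 * (((q:ℝ)+1) * (α.card : ℝ)) = 2 * (tcount Y α 1 : ℝ) + 2 * (tcount Y α 2 : ℝ)
      + ∑ v : V, (pcount Y α v : ℝ) := by
    exact_mod_cast congrArg (Nat.cast : ℕ → ℝ) hcomb
  have hI2 : ∑ v : V, ((alphaV α v).card : ℝ) = 2 * (α.card : ℝ) := by
    exact_mod_cast congrArg (Nat.cast : ℕ → ℝ) (sum_alphaV α hc2)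
  -- sum the mixing bound
  have hsumP : ∑ v : V, (pcount Y α v : ℝ) ≤ Real.sqrt q * (2 * (α.card : ℝ))
      + (((q:ℝ) + 1 - Real.sqrt q) / (2 * ((q:ℝ)^2 + q + 1)))
        * ∑ v : V, ((alphaV α v).card : ℝ)^2 := by
    calc ∑ v : V, (pcount Y α v : ℝ)
        ≤ ∑ v : V, (Real.sqrt q * ((alphaV α v).card : ℝ)
          + (((q:ℝ) + 1 - Real.sqrt q) / (2 * ((q:ℝ)^2 + q + 1))) * ((alphaV α v).card : ℝ)^2) :=
          Finset.sum_le_sum fun v _ => hmix v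
      _ = Real.sqrt q * ∑ v : V, ((alphaV α v).card : ℝ)
          + (((q:ℝ) + 1 - Real.sqrt q) / (2 * ((q:ℝ)^2 + q + 1)))
            * ∑ v : V, ((alphaV α v).card : ℝ)^2 := by
          rw [Finset.sum_add_distrib, Finset.mul_sum, Finset.mul_sum]
      _ = Real.sqrt q * (2 * (α.card : ℝ))
          + (((q:ℝ) + 1 - Real.sqrt q) / (2 * ((q:ℝ)^2 + q + 1)))
            * ∑ v : V, ((alphaV α v).card : ℝ)^2 := by rw [hI2]
  -- thin/thick bound on the sum of squares
  have hsq : ∑ v : V, ((alphaV α v).card : ℝ)^2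
      ≤ (2 * ((q:ℝ)^2 + q + 1) / 2) * (2 * (α.card : ℝ))
        - ε * (2 * ((q:ℝ)^2 + q + 1) / 2) *
          (∑ v ∈ Finset.univ.filter (fun v : V => (alphaV α v).Nonempty ∧
              ((alphaV α v).card : ℝ) < (1 - ε) * (2 * ((q : ℝ) ^ 2 + q + 1)) / 2),
            ((alphaV α v).card : ℝ)) := by
    set p : V → Prop := fun v => (alphaV α v).Nonempty ∧
      ((alphaV α v).card : ℝ) < (1 - ε) * (2 * ((q : ℝ) ^ 2 + q + 1)) / 2 with hp
    have hsplit := Finset.sum_filter_add_sum_filter_not Finset.univ p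
      (fun v => ((alphaV α v).card : ℝ)^2)
    have hsplit2 := Finset.sum_filter_add_sum_filter_not Finset.univ p
      (fun v => ((alphaV α v).card : ℝ))
    have hbound1 : ∑ v ∈ Finset.univ.filter p, ((alphaV α v).card : ℝ)^2
        ≤ ∑ v ∈ Finset.univ.filter p,
            ((1 - ε) * (2 * ((q : ℝ) ^ 2 + q + 1)) / 2) * ((alphaV α v).card : ℝ) := by
      refine Finset.sum_le_sum fun v hv => ?_
      have hv' := (Finset.mem_filter.1 hv).2
      have h1 : ((alphaV α v).card : ℝ) ≤ (1 - ε) * (2 * ((q : ℝ) ^ 2 + q + 1)) / 2 :=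
        le_of_lt hv'.2
      have h2 : (0:ℝ) ≤ ((alphaV α v).card : ℝ) := Nat.cast_nonneg _
      nlinarith
    have hbound2 : ∑ v ∈ Finset.univ.filter (fun v => ¬ p v), ((alphaV α v).card : ℝ)^2
        ≤ ∑ v ∈ Finset.univ.filter (fun v => ¬ p v),
            (2 * ((q : ℝ) ^ 2 + q + 1) / 2) * ((alphaV α v).card : ℝ) := by
      refine Finset.sum_le_sum fun v hv => ?_
      have h1 := hlocmin v
      have h2 : (0:ℝ) ≤ ((alphaV α v).card : ℝ) := Nat.cast_nonneg _
      nlinarith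
    rw [← hsplit]
    rw [← Finset.mul_sum] at hbound1 hbound2
    have hr0 : ∑ v ∈ Finset.univ.filter p, ((alphaV α v).card : ℝ)
        = 2 * (α.card : ℝ) - ∑ v ∈ Finset.univ.filter (fun v => ¬ p v), ((alphaV α v).card : ℝ) := by
      rw [← hI2, ← hsplit2]; ring
    calc ∑ v ∈ Finset.univ.filter p, ((alphaV α v).card : ℝ)^2
          + ∑ v ∈ Finset.univ.filter (fun v => ¬ p v), ((alphaV α v).card : ℝ)^2
        ≤ ((1 - ε) * (2 * ((q : ℝ) ^ 2 + q + 1)) / 2)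
            * (∑ v ∈ Finset.univ.filter p, ((alphaV α v).card : ℝ))
          + (2 * ((q : ℝ) ^ 2 + q + 1) / 2)
            * (∑ v ∈ Finset.univ.filter (fun v => ¬ p v), ((alphaV α v).card : ℝ)) := by
          exact add_le_add hbound1 hbound2
      _ = (2 * ((q:ℝ)^2 + q + 1) / 2) * (2 * (α.card : ℝ))
          - ε * (2 * ((q:ℝ)^2 + q + 1) / 2)
            * (∑ v ∈ Finset.univ.filter p, ((alphaV α v).card : ℝ)) := by
          have h3 : ∑ v ∈ Finset.univ.filter (fun v => ¬ p v), ((alphaV α v).card : ℝ)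
              = 2 * (α.card : ℝ) - ∑ v ∈ Finset.univ.filter p, ((alphaV α v).card : ℝ) := by
            rw [← hI2, ← hsplit2]; ring
          rw [h3]; ring
  -- final assembly
  set r : ℝ := ∑ v ∈ Finset.univ.filter (fun v : V => (alphaV α v).Nonempty ∧
      ((alphaV α v).card : ℝ) < (1 - ε) * (2 * ((q : ℝ) ^ 2 + q + 1)) / 2),
    ((alphaV α v).card : ℝ) with hr
  have hc0 : (0:ℝ) ≤ ((q:ℝ) + 1 - Real.sqrt q) / (2 * ((q:ℝ)^2 + q + 1)) := by
    apply div_nonneg (by linarith) hQpos.le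
  have hkey : (((q:ℝ) + 1 - Real.sqrt q) / (2 * ((q:ℝ)^2 + q + 1)))
      * (∑ v : V, ((alphaV α v).card : ℝ)^2)
      ≤ ((q:ℝ) + 1 - Real.sqrt q) * (α.card : ℝ)
        - (ε / 2) * ((q:ℝ) + 1 - Real.sqrt q) * r := by
    have h1 := mul_le_mul_of_nonneg_left hsq hc0
    have hcQ : (((q:ℝ) + 1 - Real.sqrt q) / (2 * ((q:ℝ)^2 + q + 1))) * (2 * ((q:ℝ)^2 + q + 1))
        = (q:ℝ) + 1 - Real.sqrt q := by
      field_simp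
    calc (((q:ℝ) + 1 - Real.sqrt q) / (2 * ((q:ℝ)^2 + q + 1)))
        * (∑ v : V, ((alphaV α v).card : ℝ)^2)
        ≤ (((q:ℝ) + 1 - Real.sqrt q) / (2 * ((q:ℝ)^2 + q + 1)))
          * ((2 * ((q:ℝ)^2 + q + 1) / 2) * (2 * (α.card : ℝ))
            - ε * (2 * ((q:ℝ)^2 + q + 1) / 2) * r) := h1
      _ = ((((q:ℝ) + 1 - Real.sqrt q) / (2 * ((q:ℝ)^2 + q + 1))) * (2 * ((q:ℝ)^2 + q + 1)))
            * (α.card : ℝ)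
          - (ε / 2) * ((((q:ℝ) + 1 - Real.sqrt q) / (2 * ((q:ℝ)^2 + q + 1)))
            * (2 * ((q:ℝ)^2 + q + 1))) * r := by ring
      _ = ((q:ℝ) + 1 - Real.sqrt q) * (α.card : ℝ)
          - (ε / 2) * ((q:ℝ) + 1 - Real.sqrt q) * r := by rw [hcQ]
  linarith [hsumP, hcombR, hkey]
end

section
/- For every ε' > 0 there exists q_0 = q_0(ε') such that for every integer q ≥ q_0 the following holds. Let Y be as in the context and let α ∈ B^1(Y,F_2), i.e. α is the set of edges with exactly one endpoint in A for some set A of vertices of Y. If |α_v| ≤ Q/2 for every vertex v (local minimality) and |α| < |Y(1)|/(4(1+ε')), where Y(1) is the set of edges of Y, then α = ∅. -/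
open scoped Classical
open Matrix

variable {V : Type} [Fintype V] [DecidableEq V]

/- ### Auxiliary lemmas -/

lemma quad_bound {n : Type} [Fintype n] [DecidableEq n] (M : Matrix n n ℝ)
    (hM : M.IsHermitian) (c : ℝ)
    (heig : ∀ (μ : ℝ) (f : n → ℝ), f ≠ 0 → M *ᵥ f = μ • f → (∀ i j, f i = f j) ∨ |μ| ≤ c)
    (g : n → ℝ) (hg : ∑ i, g i = 0) :
    |g ⬝ᵥ (M *ᵥ g)| ≤ c * (g ⬝ᵥ g) := by
  cases isEmpty_or_nonempty n with
  | inl h => simp [dotProduct]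
  | inr h =>
  classical
  set b := hM.eigenvectorBasis with hb
  set lam := hM.eigenvalues with hlam
  have hrepr : ∀ (x : EuclideanSpace ℝ n) (i : n), b.repr x i = (b i : n → ℝ) ⬝ᵥ x := by
    intro x i
    rw [b.repr_apply_apply]
    simp [PiLp.inner_apply, dotProduct]
    exact Finset.sum_congr rfl fun _ _ => mul_comm _ _
  have hMg : ∀ i : n, b.repr (WithLp.toLp 2 (M *ᵥ g)) i = lam i * b.repr (WithLp.toLp 2 g) i := by
    intro i
    rw [hrepr, hrepr]
    simp only [WithLp.ofLp_toLp]
    have h1 : (b i : n → ℝ) ⬝ᵥ (M *ᵥ g) = (M *ᵥ (b i : n → ℝ)) ⬝ᵥ g := by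
      rw [Matrix.dotProduct_mulVec, ← Matrix.mulVec_transpose]
      congr 1
      conv_rhs => rw [← hM.eq]
      rw [Matrix.conjTranspose_eq_transpose_of_trivial]
    have h2 : M *ᵥ (b i : n → ℝ) = lam i • (b i : n → ℝ) := hM.mulVec_eigenvectorBasis i
    rw [h1, h2]
    simp [dotProduct, PiLp.smul_apply, smul_eq_mul, Finset.mul_sum, mul_assoc]
  have hinner : ∀ x y : EuclideanSpace ℝ n,
      (x : n → ℝ) ⬝ᵥ (y : n → ℝ) = ∑ i, b.repr x i * b.repr y i := by
    intro x y
    have h3 : (inner ℝ x y : ℝ) = (inner ℝ (b.repr x) (b.repr y) : ℝ) := (b.repr.inner_map_map x y).symm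
    rw [PiLp.inner_apply, PiLp.inner_apply] at h3
    simp only [RCLike.inner_apply, starRingEnd_apply, star_trivial] at h3
    simpa [dotProduct, mul_comm] using h3
  have e1 : g ⬝ᵥ (M *ᵥ g) = ∑ i, lam i * (b.repr (WithLp.toLp 2 g) i)^2 := by
    rw [show g ⬝ᵥ (M *ᵥ g) = _ from hinner (WithLp.toLp 2 g) (WithLp.toLp 2 (M *ᵥ g))]
    apply Finset.sum_congr rfl
    intro i _
    rw [hMg]
    ring
  have e2 : g ⬝ᵥ g = ∑ i, (b.repr (WithLp.toLp 2 g) i)^2 := by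
    rw [show g ⬝ᵥ g = _ from hinner (WithLp.toLp 2 g) (WithLp.toLp 2 g)]; apply Finset.sum_congr rfl; intro i _; ring
  have key : ∀ i : n, |lam i * (b.repr (WithLp.toLp 2 g) i)^2| ≤ c * (b.repr (WithLp.toLp 2 g) i)^2 := by
    intro i
    have hbne : (b i : n → ℝ) ≠ 0 := by
      intro h0
      have := b.orthonormal.ne_zero i
      exact this (by ext j; exact congrFun h0 j)
    rcases heig (lam i) (b i : n → ℝ) hbne (hM.mulVec_eigenvectorBasis i) with hconst | hsmall
    · obtain ⟨j0⟩ := h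
      have hz : b.repr (WithLp.toLp 2 g) i = 0 := by
        rw [hrepr]
        simp only [WithLp.ofLp_toLp]
        have : (b i : n → ℝ) ⬝ᵥ g = ∑ j, (b i : n → ℝ) j0 * g j := by
          apply Finset.sum_congr rfl
          intro j _
          rw [hconst j j0]
        rw [this, ← Finset.mul_sum, hg, mul_zero]
      rw [hz]
      simp
    · rw [abs_mul, abs_pow, sq_abs]
      apply mul_le_mul_of_nonneg_right hsmall (sq_nonneg _)
  calc |g ⬝ᵥ (M *ᵥ g)| = |∑ i, lam i * (b.repr (WithLp.toLp 2 g) i)^2| := by rw [e1]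
    _ ≤ ∑ i, |lam i * (b.repr (WithLp.toLp 2 g) i)^2| := Finset.abs_sum_le_sum_abs _ _
    _ ≤ ∑ i, c * (b.repr (WithLp.toLp 2 g) i)^2 := Finset.sum_le_sum fun i _ => key i
    _ = c * (g ⬝ᵥ g) := by rw [e2, Finset.mul_sum]

/-- A `Q`-eigenvector of the adjacency matrix of a connected `Q`-regular graph is constant. -/
lemma adj_eig_const (G : SimpleGraph V) (hconn : G.Connected) (Q : ℕ)
    (hreg : ∀ v, G.degree v = Q) (f : V → ℝ)
    (hf : G.adjMatrix ℝ *ᵥ f = (Q : ℝ) • f) : ∀ i j, f i = f j := by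
  have hlap : G.lapMatrix ℝ *ᵥ f = 0 := by
    ext v
    have hA : (G.adjMatrix ℝ *ᵥ f) v = (Q : ℝ) * f v := by rw [hf]; simp
    rw [SimpleGraph.lapMatrix, Matrix.sub_mulVec]
    simp [SimpleGraph.degMatrix_mulVec_apply, hreg v, hA]
  have h0 : Matrix.toLin' (G.lapMatrix ℝ) f = 0 := by
    rw [Matrix.toLin'_apply, hlap]
  have := (G.lapMatrix_mulVec_eq_zero_iff_forall_reachable).mp hlap
  intro i j
  exact this i j (hconn.preconnected i j)

lemma mem_alpha_iff (Y : SComplex V) (A : Finset V) (e : Finset V) :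
    e ∈ (Y.K 2).filter (fun e => (e ∩ A).card = 1) ↔
    ∃ u w, u ∈ A ∧ w ∉ A ∧ (skeletonGraph Y).Adj u w ∧ e = {u, w} := by
  constructor
  · intro he
    rw [Finset.mem_filter] at he
    obtain ⟨heK, hcard⟩ := he
    rw [SComplex.K, Finset.mem_filter] at heK
    obtain ⟨hef, he2⟩ := heK
    obtain ⟨u, hu⟩ := Finset.card_eq_one.mp hcard
    have huA : u ∈ e ∩ A := hu ▸ Finset.mem_singleton_self u
    have hue : u ∈ e := Finset.mem_of_mem_inter_left huA
    have huA' : u ∈ A := Finset.mem_of_mem_inter_right huA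
    obtain ⟨w, hwe, hwu⟩ := Finset.exists_mem_ne (by rw [he2]; norm_num) u
    have hwA : w ∉ A := by
      intro hwA
      have : w ∈ e ∩ A := Finset.mem_inter_of_mem hwe hwA
      rw [hu] at this
      exact hwu (Finset.mem_singleton.mp this)
    have hew : e = {u, w} := by
      symm
      apply Finset.eq_of_subset_of_card_le
      · exact Finset.insert_subset_iff.mpr ⟨hue, Finset.singleton_subset_iff.mpr hwe⟩
      · rw [he2, Finset.card_pair (Ne.symm hwu)]
    exact ⟨u, w, huA', hwA, ⟨Ne.symm hwu, hew ▸ hef⟩, hew⟩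
  · rintro ⟨u, w, huA, hwA, hadj, rfl⟩
    rw [Finset.mem_filter]
    constructor
    · rw [SComplex.K, Finset.mem_filter]
      exact ⟨hadj.2, Finset.card_pair hadj.1⟩
    · have : ({u, w} : Finset V) ∩ A = {u} := by
        ext z
        simp only [Finset.mem_inter, Finset.mem_insert, Finset.mem_singleton]
        constructor
        · rintro ⟨rfl | rfl, hzA⟩
          · rfl
          · exact absurd hzA hwA
        · rintro rfl
          exact ⟨Or.inl rfl, huA⟩
      rw [this, Finset.card_singleton]

lemma alpha_eq_image (Y : SComplex V) (A : Finset V) :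
    (Y.K 2).filter (fun e => (e ∩ A).card = 1)
      = ((A ×ˢ Aᶜ).filter fun p => (skeletonGraph Y).Adj p.1 p.2).image
          (fun p => ({p.1, p.2} : Finset V)) := by
  ext e
  rw [mem_alpha_iff]
  simp only [Finset.mem_image, Finset.mem_filter, Finset.mem_product, Finset.mem_compl]
  constructor
  · rintro ⟨u, w, h1, h2, h3, rfl⟩
    exact ⟨(u, w), ⟨⟨h1, h2⟩, h3⟩, rfl⟩
  · rintro ⟨⟨u, w⟩, ⟨⟨h1, h2⟩, h3⟩, rfl⟩
    exact ⟨u, w, h1, h2, h3, rfl⟩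

lemma alpha_card (Y : SComplex V) (A : Finset V) :
    ((Y.K 2).filter (fun e => (e ∩ A).card = 1)).card
      = ∑ v ∈ A, (Aᶜ.filter ((skeletonGraph Y).Adj v)).card := by
  rw [alpha_eq_image, Finset.card_image_of_injOn]
  · rw [Finset.card_filter, Finset.sum_product]
    apply Finset.sum_congr rfl
    intro v _
    rw [Finset.card_filter]
  · rintro ⟨u, w⟩ hp ⟨x, y⟩ hq hpq
    simp only [Finset.coe_filter, Finset.mem_product, Finset.mem_compl, Set.mem_setOf_eq] at hp hq
    obtain ⟨⟨hu, hw⟩, -⟩ := hp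
    obtain ⟨⟨hx, hy⟩, -⟩ := hq
    simp only at hpq
    have h1 : u = x := by
      have hm : u ∈ ({x, y} : Finset V) := hpq ▸ Finset.mem_insert_self _ _
      rcases Finset.mem_insert.mp hm with h | h
      · exact h
      · rw [Finset.mem_singleton] at h
        subst h
        exact absurd hu hy
    have h2 : w = y := by
      have hm : w ∈ ({x, y} : Finset V) :=
        hpq ▸ Finset.mem_insert_of_mem (Finset.mem_singleton_self _)
      rcases Finset.mem_insert.mp hm with h | h
      · subst h
        exact absurd hx hw
      · exact Finset.mem_singleton.mp h
    simp [h1, h2]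

lemma alphaV_card_mem (Y : SComplex V) (A : Finset V) {v : V} (hv : v ∈ A) :
    (alphaV ((Y.K 2).filter fun e => (e ∩ A).card = 1) v).card
      = (Aᶜ.filter ((skeletonGraph Y).Adj v)).card := by
  have him : alphaV ((Y.K 2).filter fun e => (e ∩ A).card = 1) v
      = (Aᶜ.filter ((skeletonGraph Y).Adj v)).image (fun w => ({v, w} : Finset V)) := by
    ext e
    rw [alphaV, Finset.mem_filter]
    simp only [Finset.mem_image, Finset.mem_filter, Finset.mem_compl]
    constructor
    · rintro ⟨hα, hve⟩
      obtain ⟨u, w, huA, hwA, hadj, rfl⟩ := (mem_alpha_iff Y A _).mp (Finset.mem_filter.mpr hα)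
      rcases Finset.mem_insert.mp hve with rfl | hvw
      · exact ⟨w, ⟨hwA, hadj⟩, rfl⟩
      · rw [Finset.mem_singleton] at hvw
        subst hvw
        exact absurd hv hwA
    · rintro ⟨w, ⟨hwA, hadj⟩, rfl⟩
      exact ⟨Finset.mem_filter.mp ((mem_alpha_iff Y A _).mpr ⟨v, w, hv, hwA, hadj, rfl⟩),
        Finset.mem_insert_self _ _⟩
  rw [him, Finset.card_image_of_injOn]
  rintro w hw w' hw' hww
  simp only [Finset.coe_filter, Finset.mem_compl, Set.mem_setOf_eq] at hw hw'
  have hwv : w ≠ v := fun h => hw.1 (h ▸ hv)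
  simp only at hww
  have : w ∈ ({v, w'} : Finset V) :=
    hww ▸ Finset.mem_insert_of_mem (Finset.mem_singleton_self _)
  rcases Finset.mem_insert.mp this with h | h
  · exact absurd h hwv
  · exact Finset.mem_singleton.mp h

lemma alphaV_card_not_mem (Y : SComplex V) (A : Finset V) {v : V} (hv : v ∉ A) :
    (alphaV ((Y.K 2).filter fun e => (e ∩ A).card = 1) v).card
      = (A.filter ((skeletonGraph Y).Adj v)).card := by
  have him : alphaV ((Y.K 2).filter fun e => (e ∩ A).card = 1) v
      = (A.filter ((skeletonGraph Y).Adj v)).image (fun u => ({v, u} : Finset V)) := by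
    ext e
    rw [alphaV, Finset.mem_filter]
    simp only [Finset.mem_image, Finset.mem_filter]
    constructor
    · rintro ⟨hα, hve⟩
      obtain ⟨u, w, huA, hwA, hadj, rfl⟩ := (mem_alpha_iff Y A _).mp (Finset.mem_filter.mpr hα)
      rcases Finset.mem_insert.mp hve with rfl | hvw
      · exact absurd huA hv
      · rw [Finset.mem_singleton] at hvw
        subst hvw
        exact ⟨u, ⟨huA, hadj.symm⟩, Finset.pair_comm v u⟩
    · rintro ⟨u, ⟨huA, hadj⟩, rfl⟩
      refine ⟨Finset.mem_filter.mp ((mem_alpha_iff Y A _).mpr ⟨u, v, huA, hv, hadj.symm, Finset.pair_comm v u⟩),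
        Finset.mem_insert_self _ _⟩
  rw [him, Finset.card_image_of_injOn]
  rintro w hw w' hw' hww
  simp only [Finset.coe_filter, Set.mem_setOf_eq] at hw hw'
  have hwv : w ≠ v := fun h => hv (h ▸ hw.1)
  simp only at hww
  have : w ∈ ({v, w'} : Finset V) :=
    hww ▸ Finset.mem_insert_of_mem (Finset.mem_singleton_self _)
  rcases Finset.mem_insert.mp this with h | h
  · exact absurd h hwv
  · exact Finset.mem_singleton.mp h

lemma K2_card (Y : SComplex V) (Qn : ℕ)
    (hlk : ∀ v : V, ((Y.K 2).filter fun e => v ∈ e).card = Qn) :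
    2 * (Y.K 2).card = Fintype.card V * Qn := by
  have h1 : ∑ v : V, ((Y.K 2).filter fun e => v ∈ e).card = ∑ e ∈ Y.K 2, e.card := by
    simp_rw [Finset.card_filter]
    rw [Finset.sum_comm]
    apply Finset.sum_congr rfl
    intro e _
    rw [← Finset.card_filter, Finset.filter_univ_mem]
  have h2 : ∑ e ∈ Y.K 2, e.card = 2 * (Y.K 2).card := by
    calc ∑ e ∈ Y.K 2, e.card = ∑ _e ∈ Y.K 2, 2 :=
          Finset.sum_congr rfl (fun e he => (Finset.mem_filter.mp he).2)
      _ = 2 * (Y.K 2).card := by rw [Finset.sum_const, smul_eq_mul, mul_comm]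
  rw [← h2, ← h1]
  simp [hlk, Finset.sum_const, Finset.card_univ]

lemma norm_expand (A : Finset V) (s t : ℝ) :
    (fun v => s * (if v ∈ A then (1:ℝ) else 0) - t) ⬝ᵥ
      (fun v => s * (if v ∈ A then (1:ℝ) else 0) - t)
    = s^2*A.card - 2*s*t*A.card + t^2*(Fintype.card V) := by
  simp only [dotProduct]
  calc ∑ v, (s * (if v ∈ A then (1:ℝ) else 0) - t) * (s * (if v ∈ A then (1:ℝ) else 0) - t)
      = ∑ v, ((s^2 - 2*s*t) * (if v ∈ A then (1:ℝ) else 0) + t^2) := by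
        apply Finset.sum_congr rfl; intro v _; split_ifs <;> ring
    _ = (s^2 - 2*s*t) * (∑ v, if v ∈ A then (1:ℝ) else 0) + (Fintype.card V) * t^2 := by
        rw [Finset.sum_add_distrib, ← Finset.mul_sum, Finset.sum_const, nsmul_eq_mul,
          Finset.card_univ]
    _ = s^2*A.card - 2*s*t*A.card + t^2*(Fintype.card V) := by
        rw [Finset.sum_boole, Finset.filter_univ_mem]
        ring

lemma dot_expand (M : Matrix V V ℝ) (Q : ℝ) (hrow : ∀ v, ∑ w, M v w = Q)
    (hcol : ∀ w, ∑ v, M v w = Q) (A : Finset V) (s t : ℝ) :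
    (fun v => s * (if v ∈ A then (1:ℝ) else 0) - t) ⬝ᵥ
      (M *ᵥ fun v => s * (if v ∈ A then (1:ℝ) else 0) - t)
    = s^2 * (∑ v ∈ A, ∑ w ∈ A, M v w) - 2*s*t*Q*A.card + t^2 * Q * (Fintype.card V) := by
  have hin : ∀ v, (M *ᵥ fun w => s * (if w ∈ A then (1:ℝ) else 0) - t) v
      = s * (∑ w ∈ A, M v w) - t * Q := by
    intro v
    show ∑ w, M v w * (s * (if w ∈ A then (1:ℝ) else 0) - t) = _
    calc ∑ w, M v w * (s * (if w ∈ A then (1:ℝ) else 0) - t)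
        = ∑ w, (s * (if w ∈ A then M v w else 0) - t * M v w) := by
          apply Finset.sum_congr rfl; intro w _; split_ifs <;> ring
      _ = s * (∑ w, if w ∈ A then M v w else 0) - t * ∑ w, M v w := by
          rw [Finset.sum_sub_distrib, Finset.mul_sum, Finset.mul_sum]
      _ = s * (∑ w ∈ A, M v w) - t * Q := by rw [Fintype.sum_ite_mem, hrow]
  have hswap : ∑ v, ∑ w ∈ A, M v w = Q * A.card := by
    rw [Finset.sum_comm (f := fun v w => M v w)]
    simp [hcol, Finset.sum_const, mul_comm]
  calc (fun v => s * (if v ∈ A then (1:ℝ) else 0) - t) ⬝ᵥ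
      (M *ᵥ fun v => s * (if v ∈ A then (1:ℝ) else 0) - t)
      = ∑ v, (s * (if v ∈ A then (1:ℝ) else 0) - t) * (s * (∑ w ∈ A, M v w) - t * Q) := by
        simp only [dotProduct]
        apply Finset.sum_congr rfl
        intro v _
        rw [hin v]
    _ = ∑ v, (s^2 * (if v ∈ A then (∑ w ∈ A, M v w) else 0)
          - s*t*Q*(if v ∈ A then (1:ℝ) else 0) - s*t*(∑ w ∈ A, M v w) + t^2*Q) := by
        apply Finset.sum_congr rfl; intro v _; split_ifs <;> ring
    _ = s^2 * (∑ v, if v ∈ A then (∑ w ∈ A, M v w) else 0)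
          - s*t*Q*(∑ v, if v ∈ A then (1:ℝ) else 0)
          - s*t*(∑ v, ∑ w ∈ A, M v w) + (Fintype.card V) * (t^2*Q) := by
        rw [Finset.sum_add_distrib, Finset.sum_sub_distrib, Finset.sum_sub_distrib,
          ← Finset.mul_sum, ← Finset.mul_sum, ← Finset.mul_sum, Finset.sum_const,
          nsmul_eq_mul, Finset.card_univ]
    _ = s^2 * (∑ v ∈ A, ∑ w ∈ A, M v w) - 2*s*t*Q*A.card + t^2 * Q * (Fintype.card V) := by
        rw [Fintype.sum_ite_mem, Finset.sum_boole, Finset.filter_univ_mem, hswap]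
        ring


set_option maxHeartbeats 1000000 in
/-- For every `ε' > 0` there is `q₀ = q₀(ε')` such that for all `q ≥ q₀`
and every complex `Y` satisfying the standing hypotheses: every coboundary
`α = δ₀(A) ∈ B¹(Y,F₂)` with `|α_v| ≤ Q/2` for all `v` (local minimality) and
`|α| < |Y(1)|/(4(1+ε'))` is empty. -/
theorem small_locally_minimal_coboundary_is_zero
    (ε' : ℝ) (hε' : 0 < ε') :
    ∃ q₀ : ℕ, ∀ q : ℕ, q₀ ≤ q →
      ∀ (V : Type) [Fintype V] [DecidableEq V], ∀ (Y : SComplex V), Setup q Y →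
        ∀ α : Finset (Finset V),
          (∃ A : Finset V, α = (Y.K 2).filter fun e => (e ∩ A).card = 1) →
          (∀ v : V, ((alphaV α v).card : ℝ) ≤ 2 * ((q : ℝ) ^ 2 + q + 1) / 2) →
          (α.card : ℝ) < ((Y.K 2).card : ℝ) / (4 * (1 + ε')) →
          α = ∅ := by
  refine ⟨100, fun q hq V _ _ Y hsetup α hAex hloc hsmall => ?_⟩
  obtain ⟨hq2, hpure, htri, hconn, hdeg, hspec, hlink⟩ := hsetup
  obtain ⟨A, hαA⟩ := hAex
  by_contra hne
  have hAne : A.Nonempty := by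
    rw [Finset.nonempty_iff_ne_empty]
    rintro rfl
    apply hne
    rw [hαA, Finset.filter_eq_empty_iff]
    intro e _
    simp
  have hBne : Aᶜ.Nonempty := by
    rw [Finset.nonempty_iff_ne_empty]
    intro h
    have hAu : A = Finset.univ := by
      rwa [Finset.compl_eq_empty_iff] at h
    apply hne
    rw [hαA, Finset.filter_eq_empty_iff]
    intro e he
    rw [hAu, Finset.inter_univ]
    have h2 : e.card = 2 := (Finset.mem_filter.mp he).2
    omega
  set G := skeletonGraph Y with hG
  set Qn : ℕ := 2 * (q ^ 2 + q + 1) with hQn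
  -- natural number counting facts
  have hdegQ : ∀ v : V, (Finset.univ.filter (G.Adj v)).card = Qn := by
    intro v
    have h1 : (Finset.univ.filter (G.Adj v)).card = G.degree v := by
      rw [← SimpleGraph.neighborFinset_eq_filter]
      rfl
    rw [h1, hdeg v]
  have hsplit : ∀ v : V, (A.filter (G.Adj v)).card + (Aᶜ.filter (G.Adj v)).card = Qn := by
    intro v
    have hd : Disjoint (A.filter (G.Adj v)) (Aᶜ.filter (G.Adj v)) :=
      disjoint_compl_right.mono (Finset.filter_subset _ _) (Finset.filter_subset _ _)
    rw [← Finset.card_union_of_disjoint hd, ← Finset.filter_union, Finset.union_compl, hdegQ v]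
  have hacard : α.card = ∑ v ∈ A, (Aᶜ.filter (G.Adj v)).card := by
    rw [hαA]; exact alpha_card Y A
  have hK2 : 2 * (Y.K 2).card = Fintype.card V * Qn :=
    K2_card Y Qn (fun v => (hlink v).2.2.2.1)
  -- real number quantities
  set nn : ℝ := (Fintype.card V : ℝ) with hnn
  set a : ℝ := (A.card : ℝ) with haa
  set b : ℝ := (Aᶜ.card : ℝ) with hbb
  set Q : ℝ := (Qn : ℝ) with hQ
  have ha1 : (1:ℝ) ≤ a := Nat.one_le_cast.mpr (Finset.card_pos.mpr hAne)
  have hb1 : (1:ℝ) ≤ b := Nat.one_le_cast.mpr (Finset.card_pos.mpr hBne)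
  have hnab : nn = a + b := by
    rw [hnn, haa, hbb]
    exact_mod_cast (Finset.card_add_card_compl A).symm
  have hq100 : (100:ℝ) ≤ (q:ℝ) := by exact_mod_cast hq
  have hQval : Q = 2*((q:ℝ)^2 + (q:ℝ) + 1) := by
    rw [hQ, hQn]; push_cast; ring
  have hnpos : 0 < nn := by linarith
  set EAA : ℝ := ∑ v ∈ A, ((A.filter (G.Adj v)).card : ℝ) with hEAA
  set EBB : ℝ := ∑ v ∈ Aᶜ, ((Aᶜ.filter (G.Adj v)).card : ℝ) with hEBB
  have hsplitR : ∀ v : V, ((A.filter (G.Adj v)).card : ℝ) + ((Aᶜ.filter (G.Adj v)).card : ℝ) = Q := by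
    intro v
    rw [hQ]
    exact_mod_cast hsplit v
  -- local minimality
  have hlocA : ∀ v ∈ A, ((Aᶜ.filter (G.Adj v)).card : ℝ) ≤ Q/2 := by
    intro v hv
    have h := hloc v
    have h2 : (alphaV α v).card = (Aᶜ.filter (G.Adj v)).card := by
      rw [hαA]; exact alphaV_card_mem Y A hv
    rw [h2] at h
    rw [hQval]
    linarith
  have hlocB : ∀ v ∈ Aᶜ, ((A.filter (G.Adj v)).card : ℝ) ≤ Q/2 := by
    intro v hv
    have h := hloc v
    have h2 : (alphaV α v).card = (A.filter (G.Adj v)).card := by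
      rw [hαA]; exact alphaV_card_not_mem Y A (Finset.mem_compl.mp hv)
    rw [h2] at h
    rw [hQval]
    linarith
  have hEAA_lb : a * (Q/2) ≤ EAA := by
    have hbound : ∀ v ∈ A, Q/2 ≤ ((A.filter (G.Adj v)).card : ℝ) := by
      intro v hv
      have := hsplitR v
      have := hlocA v hv
      linarith
    calc a * (Q/2) = ∑ _v ∈ A, Q/2 := by
          rw [Finset.sum_const, nsmul_eq_mul, haa]
      _ ≤ EAA := Finset.sum_le_sum hbound
  have hEBB_lb : b * (Q/2) ≤ EBB := by
    have hbound : ∀ v ∈ Aᶜ, Q/2 ≤ ((Aᶜ.filter (G.Adj v)).card : ℝ) := by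
      intro v hv
      have := hsplitR v
      have := hlocB v hv
      linarith
    calc b * (Q/2) = ∑ _v ∈ Aᶜ, Q/2 := by
          rw [Finset.sum_const, nsmul_eq_mul, hbb]
      _ ≤ EBB := Finset.sum_le_sum hbound
  -- spectral facts
  set M := G.adjMatrix ℝ with hM
  have hherm : M.IsHermitian := by
    rw [Matrix.IsHermitian, Matrix.conjTranspose_eq_transpose_of_trivial]
    exact G.isSymm_adjMatrix
  have hrow : ∀ v, ∑ w, M v w = Q := by
    intro v
    have h1 : ∑ w, M v w = ((Finset.univ.filter (G.Adj v)).card : ℝ) := by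
      rw [← Finset.sum_boole]
      apply Finset.sum_congr rfl
      intro w _
      simp [hM, SimpleGraph.adjMatrix_apply]
    rw [h1, hdegQ v, hQ]
  have hcol : ∀ w, ∑ v, M v w = Q := by
    intro w
    rw [← hrow w]
    apply Finset.sum_congr rfl
    intro v _
    simp only [hM, SimpleGraph.adjMatrix_apply]
    rw [SimpleGraph.adj_comm]
  have heig : ∀ (μ : ℝ) (f : V → ℝ), f ≠ 0 → M *ᵥ f = μ • f →
      (∀ i j, f i = f j) ∨ |μ| ≤ 6*(q:ℝ) := by
    intro μ f hf0 hMf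
    rcases hspec μ ⟨f, hf0, hMf⟩ with hQe | hsm
    · left
      apply adj_eig_const G hconn Qn hdeg f
      have hcast : ((Qn : ℕ) : ℝ) = μ := by
        rw [hQe, hQn]; push_cast; ring
      rw [hMf, hcast]
    · right; exact hsm
  -- matrix sums over A and B
  have hMsumA : ∑ v ∈ A, ∑ w ∈ A, M v w = EAA := by
    apply Finset.sum_congr rfl
    intro v _
    rw [← Finset.sum_boole]
    apply Finset.sum_congr rfl
    intro w _
    simp [hM, SimpleGraph.adjMatrix_apply]
  have hMsumB : ∑ v ∈ Aᶜ, ∑ w ∈ Aᶜ, M v w = EBB := by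
    apply Finset.sum_congr rfl
    intro v _
    rw [← Finset.sum_boole]
    apply Finset.sum_congr rfl
    intro w _
    simp [hM, SimpleGraph.adjMatrix_apply]
  -- apply the quadratic form bound for A
  have hsumA0 : ∑ v, (fun v => nn * (if v ∈ A then (1:ℝ) else 0) - a) v = 0 := by
    simp only
    rw [Finset.sum_sub_distrib, ← Finset.mul_sum, Finset.sum_boole, Finset.filter_univ_mem,
      Finset.sum_const, nsmul_eq_mul, Finset.card_univ]
    rw [← haa, ← hnn]
    ring
  have habsA := quad_bound M hherm (6*(q:ℝ)) heig _ hsumA0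
  rw [dot_expand M Q hrow hcol A nn a, norm_expand A nn a, hMsumA, ← haa, ← hnn] at habsA
  have habsA' : |nn^2 * EAA - nn * a^2 * Q| ≤ 6*(q:ℝ) * (nn * a * b) := by
    have e1 : nn^2 * EAA - 2*nn*a*Q*a + a^2 * Q * nn = nn^2 * EAA - nn * a^2 * Q := by ring
    have e2 : nn^2*a - 2*nn*a*a + a^2*nn = nn * a * b := by
      rw [hnab]; ring
    rw [e1, e2] at habsA
    exact habsA
  -- apply the quadratic form bound for B
  have hsumB0 : ∑ v, (fun v => nn * (if v ∈ Aᶜ then (1:ℝ) else 0) - b) v = 0 := by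
    simp only
    rw [Finset.sum_sub_distrib, ← Finset.mul_sum, Finset.sum_boole, Finset.filter_univ_mem,
      Finset.sum_const, nsmul_eq_mul, Finset.card_univ]
    rw [← hbb, ← hnn]
    ring
  have habsB := quad_bound M hherm (6*(q:ℝ)) heig _ hsumB0
  rw [dot_expand M Q hrow hcol Aᶜ nn b, norm_expand Aᶜ nn b, hMsumB, ← hbb, ← hnn] at habsB
  have habsB' : |nn^2 * EBB - nn * b^2 * Q| ≤ 6*(q:ℝ) * (nn * a * b) := by
    have e1 : nn^2 * EBB - 2*nn*b*Q*b + b^2 * Q * nn = nn^2 * EBB - nn * b^2 * Q := by ring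
    have e2 : nn^2*b - 2*nn*b*b + b^2*nn = nn * a * b := by
      rw [hnab]; ring
    rw [e1, e2] at habsB
    exact habsB
  -- the size bound
  have hK2r : ((Y.K 2).card : ℝ) = nn * Q / 2 := by
    have : (2:ℝ) * ((Y.K 2).card : ℝ) = nn * Q := by
      rw [hnn, hQ]
      exact_mod_cast hK2
    linarith
  have hcardnonneg : (0:ℝ) ≤ (α.card : ℝ) := Nat.cast_nonneg _
  have hsm8 : ((α.card : ℝ)) < nn * Q / 8 := by
    have h1 : ((α.card : ℝ)) < (nn * Q / 2) / (4 * (1 + ε')) := by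
      rw [← hK2r]; exact hsmall
    have hQnn : (0:ℝ) ≤ nn * Q / 2 := by
      have : (0:ℝ) ≤ Q := by rw [hQval]; positivity
      positivity
    have h2 : (nn * Q / 2) / (4 * (1 + ε')) ≤ (nn * Q / 2) / 4 := by
      apply div_le_div_of_nonneg_left hQnn (by norm_num : (0:ℝ) < 4)
      linarith
    linarith
  -- crossing edge count
  have hacr : (α.card : ℝ) = a * Q - EAA := by
    have h1 : (α.card : ℝ) = ∑ v ∈ A, ((Aᶜ.filter (G.Adj v)).card : ℝ) := by
      rw [hacard]; push_cast; rfl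
    rw [h1]
    have h2 : ∀ v ∈ A, ((Aᶜ.filter (G.Adj v)).card : ℝ)
        = Q - ((A.filter (G.Adj v)).card : ℝ) := by
      intro v _
      have := hsplitR v
      linarith
    calc ∑ v ∈ A, ((Aᶜ.filter (G.Adj v)).card : ℝ)
        = ∑ v ∈ A, (Q - ((A.filter (G.Adj v)).card : ℝ)) := Finset.sum_congr rfl h2
      _ = a * Q - EAA := by
          rw [Finset.sum_sub_distrib, Finset.sum_const, nsmul_eq_mul, ← haa, hEAA]
  -- final contradiction
  clear_value nn a b Q EAA EBB
  have hapos : (0:ℝ) < a := by linarith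
  have hbpos : (0:ℝ) < b := by linarith
  have habA2u : nn^2 * EAA ≤ nn * a^2 * Q + 6*(q:ℝ)*(nn*a*b) := by
    linarith [(abs_le.mp habsA').2]
  have habB2u : nn^2 * EBB ≤ nn * b^2 * Q + 6*(q:ℝ)*(nn*a*b) := by
    linarith [(abs_le.mp habsB').2]
  have hQpos : (0:ℝ) < Q := by rw [hQval]; positivity
  have hQ6 : (0:ℝ) < Q - 6*(q:ℝ) := by rw [hQval]; nlinarith [hq100]
  have hQ12 : (0:ℝ) < Q - 12*(q:ℝ) := by rw [hQval]; nlinarith [hq100]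
  have h4Q : (0:ℝ) ≤ 4*Q - 96*(q:ℝ) := by rw [hQval]; nlinarith [hq100]
  -- step 1 : b*(Q - 12*q) ≤ a*Q
  have u1a : nn^2*(a*(Q/2)) ≤ nn^2*EAA := mul_le_mul_of_nonneg_left hEAA_lb (sq_nonneg nn)
  have u2 : nn*(nn*(a*(Q/2))) ≤ nn*(a^2*Q + 6*(q:ℝ)*(a*b)) := by linarith [u1a, habA2u]
  have u3 : nn*(a*(Q/2)) ≤ a^2*Q + 6*(q:ℝ)*(a*b) := le_of_mul_le_mul_left u2 hnpos
  have u4 : a*(nn*(Q/2)) ≤ a*(a*Q + 6*(q:ℝ)*b) := by linarith [u3]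
  have u5 : nn*(Q/2) ≤ a*Q + 6*(q:ℝ)*b := le_of_mul_le_mul_left u4 hapos
  have step1 : b*(Q - 12*(q:ℝ)) ≤ a*Q := by
    rw [hnab] at u5; linarith
  -- step 2 : a*(Q - 12*q) ≤ b*Q
  have v1a : nn^2*(b*(Q/2)) ≤ nn^2*EBB := mul_le_mul_of_nonneg_left hEBB_lb (sq_nonneg nn)
  have v2 : nn*(nn*(b*(Q/2))) ≤ nn*(b^2*Q + 6*(q:ℝ)*(a*b)) := by linarith [v1a, habB2u]
  have v3 : nn*(b*(Q/2)) ≤ b^2*Q + 6*(q:ℝ)*(a*b) := le_of_mul_le_mul_left v2 hnpos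
  have v4 : b*(nn*(Q/2)) ≤ b*(b*Q + 6*(q:ℝ)*a) := by linarith [v3]
  have v5 : nn*(Q/2) ≤ b*Q + 6*(q:ℝ)*a := le_of_mul_le_mul_left v4 hbpos
  have step2 : a*(Q - 12*(q:ℝ)) ≤ b*Q := by
    rw [hnab] at v5; linarith
  -- step 3 : a*b*(Q - 6*q) ≤ nn * α.card
  have hEAAval : EAA = a*Q - (α.card : ℝ) := by linarith [hacr]
  have w0 : nn^2*(a*Q - (α.card:ℝ)) ≤ nn * a^2 * Q + 6*(q:ℝ)*(nn*a*b) := by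
    rw [← hEAAval]; exact habA2u
  have w1 : nn*(a*b*(Q - 6*(q:ℝ))) ≤ nn*(nn*(α.card:ℝ)) := by
    rw [hnab] at w0 ⊢
    linarith [w0]
  have step3 : a*b*(Q - 6*(q:ℝ)) ≤ nn*(α.card:ℝ) := le_of_mul_le_mul_left w1 hnpos
  -- step 4 : 8*a*b*(Q-6q) < (a+b)^2*Q
  have s4a : nn*(α.card:ℝ) < nn*(nn*Q/8) := by
    exact mul_lt_mul_of_pos_left hsm8 hnpos
  have step4 : 8*(a*b*(Q - 6*(q:ℝ))) < ((a+b)*(a+b))*Q := by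
    rw [hnab] at s4a step3
    linarith [step3, s4a]
  -- combine
  have p1 : a*(a*(Q - 12*(q:ℝ))) ≤ a*(b*Q) := mul_le_mul_of_nonneg_left step2 hapos.le
  have p2 : b*(b*(Q - 12*(q:ℝ))) ≤ b*(a*Q) := mul_le_mul_of_nonneg_left step1 hbpos.le
  have K4 : ((a+b)*(a+b))*(Q - 12*(q:ℝ)) ≤ 4*(a*b*(Q - 6*(q:ℝ))) := by linarith [p1, p2]
  have m1 : (8*(a*b*(Q - 6*(q:ℝ))))*(Q - 12*(q:ℝ)) < (((a+b)*(a+b))*Q)*(Q - 12*(q:ℝ)) :=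
    mul_lt_mul_of_pos_right step4 hQ12
  have m2 : (((a+b)*(a+b))*(Q - 12*(q:ℝ)))*Q ≤ (4*(a*b*(Q - 6*(q:ℝ))))*Q :=
    mul_le_mul_of_nonneg_right K4 hQpos.le
  have hfac : (0:ℝ) ≤ (a*b*(Q - 6*(q:ℝ)))*(4*Q - 96*(q:ℝ)) :=
    mul_nonneg (by positivity) h4Q
  linarith [m1, m2, hfac]
end
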